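/- arXiv:1906.05072 — 6 statements merged into one kernel-verified Lean document; each statement's English description precedes it below -/
import Mathlib

section
/- Let R → A be a flat morphism of noetherian commutative rings of characteristic p with geometrically reduced fibres. Then the relative Frobenius morphism Frob_{A/R} : A ⊗_{R, Frob} R → A, sending a ⊗ r to a^p · r, is injective. -/
open TensorProduct

set_option maxHeartbeats 1000000
set_option synthInstance.maxHeartbeats 400000

universe u

/-- `Tw p i R` is `R`, viewed as an `R`-algebra via the `i`-th iterate of the
absolute Frobenius `x ↦ x^p`. -/
def Tw (p i : ℕ) (R : Type u) : Type u := R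

variable (p i : ℕ) (R : Type u)

instance [CommRing R] : CommRing (Tw p i R) := inferInstanceAs (CommRing R)

/-- The identity of `R`, as a ring isomorphism `R ≃+* Tw p i R`. -/
def twCast [CommRing R] : R ≃+* Tw p i R := RingEquiv.refl R

noncomputable instance [CommRing R] [Fact p.Prime] [CharP R p] : Algebra R (Tw p i R) :=
  ((twCast p i R).toRingHom.comp (iterateFrobenius R p i)).toAlgebra

lemma tw_algebraMap_apply [CommRing R] [Fact p.Prime] [CharP R p] (r : R) :
    algebraMap R (Tw p i R) r = twCast p i R (r ^ p ^ i) := rfl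

lemma tw_smul_def [CommRing R] [Fact p.Prime] [CharP R p] (r : R) (x : Tw p i R) :
    r • x = twCast p i R (r ^ p ^ i) * x := Algebra.smul_def r x

variable (A : Type u)

/-- The `i`-th Frobenius twist `A^{p^i/R} = A ⊗_{R, Frob^i} R` of an `R`-algebra `A`,
viewed as an `R`-algebra via the right-hand tensor factor. -/
def FTw [CommRing R] [CommRing A] [Algebra R A] [Fact p.Prime] [CharP R p] : Type u :=
  A ⊗[R] (Tw p i R)

section
variable [CommRing R] [CommRing A] [Algebra R A] [Fact p.Prime] [CharP R p]

noncomputable instance : CommRing (FTw p i R A) :=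
  inferInstanceAs (CommRing (A ⊗[R] Tw p i R))

noncomputable instance : Algebra R (FTw p i R A) :=
  ((Algebra.TensorProduct.includeRight (R := R) (A := A) (B := Tw p i R)).toRingHom.comp
    (twCast p i R).toRingHom).toAlgebra

lemma ftw_algebraMap_apply (r : R) :
    algebraMap R (FTw p i R A) r = (1 : A) ⊗ₜ[R] (twCast p i R r) := rfl

end

section
variable [CommRing R] [CommRing A] [Algebra R A] [Fact p.Prime] [CharP R p] [CharP A p]

/-- The relative Frobenius `A^{p^{i+1}/R} → A^{p^i/R}`, `a ⊗ r ↦ a^p ⊗ r`,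
as an additive map. -/
noncomputable def transAddHom : (A ⊗[R] Tw p (i + 1) R) →+ (A ⊗[R] Tw p i R) :=
  TensorProduct.liftAddHom
    { toFun := fun a =>
        { toFun := fun v => (a ^ p) ⊗ₜ[R] (twCast p i R ((twCast p (i + 1) R).symm v))
          map_zero' := by simp
          map_add' := by intro v w; simp [TensorProduct.tmul_add] }
      map_zero' := by
        ext v
        simp [zero_pow (Nat.Prime.ne_zero Fact.out)]
      map_add' := by
        intro a b
        ext v
        simp [add_pow_char, TensorProduct.add_tmul] }
    (by
      intro r a v
      simp only [AddMonoidHom.coe_mk, ZeroHom.coe_mk]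
      rw [smul_pow, TensorProduct.smul_tmul]
      congr 1
      rw [tw_smul_def, tw_smul_def, map_mul, RingEquiv.symm_apply_apply, ← map_mul]
      congr 2
      rw [← pow_mul, ← pow_succ'])

@[simp] lemma transAddHom_tmul (a : A) (v : Tw p (i + 1) R) :
    transAddHom p i R A (a ⊗ₜ[R] v) =
      (a ^ p) ⊗ₜ[R] (twCast p i R ((twCast p (i + 1) R).symm v)) :=
  TensorProduct.liftAddHom_tmul _ _ _ _

/-- The relative Frobenius `A^{p^{i+1}/R} → A^{p^i/R}` as a ring homomorphism. -/
noncomputable def transRingHom : (A ⊗[R] Tw p (i + 1) R) →+* (A ⊗[R] Tw p i R) :=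
  { transAddHom p i R A with
    map_one' := by
      show transAddHom p i R A ((1 : A) ⊗ₜ[R] (1 : Tw p (i+1) R)) = (1 : A ⊗[R] Tw p i R)
      rw [transAddHom_tmul, one_pow]
      simp [Algebra.TensorProduct.one_def]
    map_mul' := by
      intro x y
      show transAddHom p i R A (x * y) = transAddHom p i R A x * transAddHom p i R A y
      induction x using TensorProduct.induction_on with
      | zero => simp
      | tmul a v =>
        induction y using TensorProduct.induction_on with
        | zero => simp
        | tmul b w =>
          rw [Algebra.TensorProduct.tmul_mul_tmul, transAddHom_tmul, transAddHom_tmul,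
            transAddHom_tmul, Algebra.TensorProduct.tmul_mul_tmul, mul_pow, map_mul, map_mul]
        | add y₁ y₂ h₁ h₂ => rw [mul_add, map_add, h₁, h₂, map_add, mul_add]
      | add x₁ x₂ h₁ h₂ => rw [add_mul, map_add, h₁, h₂, map_add, add_mul] }

/-- The relative Frobenius `A^{p^{i+1}/R} → A^{p^i/R}` as an `R`-algebra
homomorphism (for the `R`-algebra structures through the right-hand factors). -/
noncomputable def transAlgHom : FTw p (i + 1) R A →ₐ[R] FTw p i R A :=
  { transRingHom p i R A with
    commutes' := by
      intro r
      show transAddHom p i R A ((1 : A) ⊗ₜ[R] (twCast p (i+1) R r)) =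
        (1 : A) ⊗ₜ[R] (twCast p i R r)
      simp }

@[simp] lemma transAlgHom_apply (x : FTw p (i + 1) R A) :
    transAlgHom p i R A x = transAddHom p i R A x := rfl

/-- The preperfection `A^{p^∞/R} = lim_i A^{p^i/R}`, the inverse limit of the
Frobenius twists of `A` along the relative Frobenius maps, as an `R`-subalgebra
of the product `Π i, A^{p^i/R}`. -/
noncomputable def prePerfection : Subalgebra R (∀ i, FTw p i R A) where
  carrier := {x | ∀ i, transAlgHom p i R A (x (i + 1)) = x i}
  add_mem' := by
    intro x y hx hy i
    simp only [Pi.add_apply, map_add, hx i, hy i]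
  mul_mem' := by
    intro x y hx hy i
    simp only [Pi.mul_apply, map_mul, hx i, hy i]
  algebraMap_mem' := by
    intro r i
    show transAlgHom p i R A (algebraMap R (FTw p (i+1) R A) r) = _
    rw [AlgHom.commutes]
    rfl

variable (M : Type u) [AddCommGroup M] [Module R M]

/-- The inverse limit `lim_i (A^{p^i/R} ⊗_R M)` of the modules obtained by
tensoring the Frobenius twists of `A` with an `R`-module `M`, as a submodule
of the product. -/
noncomputable def limTensor : Submodule R (∀ i, (FTw p i R A) ⊗[R] M) where
  carrier := {x | ∀ i,
    LinearMap.rTensor M (transAlgHom p i R A).toLinearMap (x (i + 1)) = x i}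
  add_mem' := by
    intro x y hx hy i
    simp only [Pi.add_apply, map_add, hx i, hy i]
  zero_mem' := by
    intro i
    simp only [Pi.zero_apply, map_zero]
  smul_mem' := by
    intro r x hx i
    simp only [Pi.smul_apply, map_smul, hx i]

/-- The natural base change map `(lim_i A^{p^i/R}) ⊗_R M → lim_i (A^{p^i/R} ⊗_R M)`
(viewed as a map into the product `Π i, A^{p^i/R} ⊗_R M`; its image lies in the
inverse limit `limTensor`). -/
noncomputable def basechange :
    (↥(prePerfection p R A) ⊗[R] M) →ₗ[R] ∀ i, (FTw p i R A) ⊗[R] M :=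
  LinearMap.pi fun i =>
    TensorProduct.map ((LinearMap.proj i).comp (prePerfection p R A).val.toLinearMap)
      LinearMap.id

end

section RelFrobenius

variable (B : Type u) [CommRing R] [Fact p.Prime] [CharP R p]
  [CommRing B] [Algebra R B] [CharP B p]

/-- The relative Frobenius `B^{p/R} = B ⊗_{R, Frob} R → B`, `b ⊗ r ↦ b^p · r`,
as an additive map. -/
noncomputable def relFrobenius : (B ⊗[R] Tw p 1 R) →+ B :=
  TensorProduct.liftAddHom
    { toFun := fun b =>
        { toFun := fun v => algebraMap R B ((twCast p 1 R).symm v) * b ^ p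
          map_zero' := by simp
          map_add' := by intro v w; simp [add_mul]
        }
      map_zero' := by
        ext v
        simp [zero_pow (Nat.Prime.ne_zero Fact.out)]
      map_add' := by
        intro a b
        ext v
        simp [add_pow_char, mul_add] }
    (by
      intro r b v
      simp only [AddMonoidHom.coe_mk, ZeroHom.coe_mk]
      rw [smul_pow, tw_smul_def, map_mul, RingEquiv.symm_apply_apply, map_mul,
        Algebra.smul_def, map_pow, pow_one]
      rw [map_pow]
      ring)

@[simp] lemma relFrobenius_tmul (b : B) (v : Tw p 1 R) :
    relFrobenius p R B (b ⊗ₜ[R] v) = algebraMap R B ((twCast p 1 R).symm v) * b ^ p :=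
  TensorProduct.liftAddHom_tmul _ _ _ _

end RelFrobenius

/-! ### Auxiliary development for the proof -/

section FrTwist

/-- The Frobenius twist of a module `M`: the same additive group, with scalars acting
through `r ↦ r ^ p`. -/
def FrM (p : ℕ) (M : Type u) : Type u := M

instance {p : ℕ} {M : Type u} [AddCommGroup M] : AddCommGroup (FrM p M) :=
  inferInstanceAs (AddCommGroup M)

noncomputable instance {p : ℕ} [Fact p.Prime] {R M : Type u} [CommRing R] [CharP R p]
    [AddCommGroup M] [Module R M] : Module R (FrM p M) :=
  Module.compHom M (frobenius R p)

/-- The identity, as an additive equivalence `M ≃+ FrM p M`. -/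
def frMk (p : ℕ) {M : Type u} [AddCommGroup M] : M ≃+ FrM p M := AddEquiv.refl M

lemma frM_smul_def {p : ℕ} [Fact p.Prime] {R M : Type u} [CommRing R] [CharP R p]
    [AddCommGroup M] [Module R M] (r : R) (m : M) :
    r • (frMk p m : FrM p M) = frMk p ((r ^ p) • m) := by
  show frobenius R p r • m = (r ^ p) • m
  rw [frobenius_def]

lemma frM_symm_smul {p : ℕ} [Fact p.Prime] {R M : Type u} [CommRing R] [CharP R p]
    [AddCommGroup M] [Module R M] (r : R) (m : FrM p M) :
    (frMk p).symm (r • m) = (r ^ p) • (frMk p).symm m := by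
  show frobenius R p r • ((frMk p).symm m) = (r ^ p) • (frMk p).symm m
  rw [frobenius_def]

/-- A linear map between modules induces a linear map between their Frobenius twists. -/
def frMap (p : ℕ) [Fact p.Prime] {R M N : Type u} [CommRing R] [CharP R p]
    [AddCommGroup M] [AddCommGroup N] [Module R M] [Module R N] (g : M →ₗ[R] N) :
    FrM p M →ₗ[R] FrM p N where
  toFun m := frMk p (g ((frMk p).symm m))
  map_add' x y := by rw [map_add, map_add, map_add]
  map_smul' r x := by
    dsimp only [RingHom.id_apply]
    rw [frM_symm_smul, map_smul]
    exact (frM_smul_def r (g ((frMk p).symm x))).symm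

@[simp] lemma frMap_apply (p : ℕ) [Fact p.Prime] {R M N : Type u} [CommRing R] [CharP R p]
    [AddCommGroup M] [AddCommGroup N] [Module R M] [Module R N] (g : M →ₗ[R] N)
    (m : FrM p M) : frMap p g m = frMk p (g ((frMk p).symm m)) := rfl

/-- The canonical semilinear "relative Frobenius" map
`A ⊗ (Frobenius twist of M) → A ⊗ M`, `a ⊗ m ↦ a ^ p ⊗ m`. -/
noncomputable def phiFr (p : ℕ) [Fact p.Prime] (R A : Type u) [CommRing R] [CharP R p]
    [CommRing A] [Algebra R A] [CharP A p] (M : Type u) [AddCommGroup M] [Module R M] :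
    (A ⊗[R] FrM p M) →+ (A ⊗[R] M) :=
  TensorProduct.liftAddHom
    { toFun := fun a =>
        { toFun := fun m => (a ^ p) ⊗ₜ[R] ((frMk p).symm m)
          map_zero' := by simp
          map_add' := by
            intro x y
            rw [map_add, TensorProduct.tmul_add] }
      map_zero' := by
        ext m
        simp [zero_pow (Nat.Prime.ne_zero Fact.out)]
      map_add' := by
        intro a b
        ext m
        simp [add_pow_char, TensorProduct.add_tmul] }
    (by
      intro r a m
      simp only [AddMonoidHom.coe_mk, ZeroHom.coe_mk]
      rw [smul_pow, TensorProduct.smul_tmul, frM_symm_smul])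

@[simp] lemma phiFr_tmul (p : ℕ) [Fact p.Prime] (R A : Type u) [CommRing R] [CharP R p]
    [CommRing A] [Algebra R A] [CharP A p] (M : Type u) [AddCommGroup M] [Module R M]
    (a : A) (m : FrM p M) :
    phiFr p R A M (a ⊗ₜ[R] m) = (a ^ p) ⊗ₜ[R] ((frMk p).symm m) :=
  TensorProduct.liftAddHom_tmul _ _ _ _

lemma phiFr_natural (p : ℕ) [Fact p.Prime] (R A : Type u) [CommRing R] [CharP R p]
    [CommRing A] [Algebra R A] [CharP A p] {M N : Type u} [AddCommGroup M] [AddCommGroup N]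
    [Module R M] [Module R N] (g : M →ₗ[R] N) (x : A ⊗[R] FrM p M) :
    g.lTensor A (phiFr p R A M x) = phiFr p R A N ((frMap p g).lTensor A x) := by
  induction x with
  | zero => simp
  | tmul a m =>
    rw [phiFr_tmul, LinearMap.lTensor_tmul, LinearMap.lTensor_tmul, phiFr_tmul]
    rfl
  | add x y hx hy => simp only [map_add, hx, hy]

lemma tensor_eq_zero_of_subsingleton {R A M : Type u} [CommRing R] [CommRing A] [Algebra R A]
    [AddCommGroup M] [Module R M] [Subsingleton M] (x : A ⊗[R] M) : x = 0 := by
  induction x with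
  | zero => rfl
  | tmul a m => rw [Subsingleton.elim m 0, TensorProduct.tmul_zero]
  | add x y hx hy => rw [hx, hy, add_zero]

end FrTwist

section PrimeCase

variable (p : ℕ) [Fact p.Prime] (R A : Type u) [CommRing R] [CommRing A] [Algebra R A]
  [CharP R p] [CharP A p]

/-- The case of a prime cyclic module `R ⧸ 𝔮`: injectivity of the relative Frobenius
follows from reducedness of `A ⊗ L` for `L` the perfect closure of the fraction field
of `R ⧸ 𝔮`, together with flatness of `A`. -/
lemma phiFr_injective_prime [Module.Flat R A]
    (hred : ∀ (L : Type u) [Field L] [Algebra R L], IsReduced (A ⊗[R] L))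
    (q : Ideal R) (hq : q.IsPrime) :
    Function.Injective (phiFr p R A (R ⧸ q)) := by
  haveI := hq
  haveI : CharP (R ⧸ q) p := by
    refine CharP.quotient' p q (fun x hx => ?_)
    by_contra hne
    refine hq.ne_top (Ideal.eq_top_of_isUnit_mem _ hx ?_)
    have hdvd : ¬ (p ∣ x) := fun h => hne ((CharP.cast_eq_zero_iff R p x).mpr h)
    have hx0 : ((x : ZMod p)) ≠ 0 := by
      rwa [Ne, ZMod.natCast_eq_zero_iff]
    have hux : IsUnit ((x : ZMod p)) := isUnit_iff_ne_zero.mpr hx0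
    have := hux.map (ZMod.castHom (dvd_refl p) R)
    rwa [map_natCast] at this
  set D := R ⧸ q with hD
  set K := FractionRing D with hK
  haveI : CharP K p := charP_of_injective_algebraMap (IsFractionRing.injective D K) p
  set L := PerfectClosure K p with hL
  set ψ : D →+* L := (PerfectClosure.of K p).comp (algebraMap D K) with hψ
  letI : Algebra R L := (ψ.comp (algebraMap R D)).toAlgebra
  have halg : ∀ r : R, algebraMap R L r = ψ (algebraMap R D r) := fun r => rfl
  have hψinj : Function.Injective ψ :=
    (PerfectClosure.of K p).injective.comp (IsFractionRing.injective D K)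
  -- the `R`-linear map `FrM p D → L`, `m ↦ (ψ m) ^ (1/p)`
  set ρ : FrM p D →ₗ[R] L :=
    { toFun := fun m => (frobeniusEquiv L p).symm (ψ ((frMk p).symm m))
      map_add' := fun x y => by
        rw [map_add, map_add, map_add]
      map_smul' := fun r m => by
        dsimp only [RingHom.id_apply]
        rw [frM_symm_smul, Algebra.smul_def, map_pow, map_mul, map_mul]
        have hsy : (frobeniusEquiv L p).symm (ψ ((algebraMap R D) r ^ p)) =
            ψ (algebraMap R D r) := by
          rw [map_pow, ← frobenius_def, frobeniusEquiv_symm_apply_frobenius]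
        rw [hsy, ← halg, ← Algebra.smul_def] } with hρ
  have hρinj : Function.Injective ρ := by
    intro x y hxy
    have := hψinj ((frobeniusEquiv L p).symm.injective hxy)
    exact (frMk p).symm.injective this
  -- the `R`-linear map `D → L` given by `ψ`
  set ι : D →ₗ[R] L :=
    { toFun := fun d => ψ d
      map_add' := fun x y => by rw [map_add]
      map_smul' := fun r d => by
        dsimp only [RingHom.id_apply]
        rw [Algebra.smul_def, map_mul, ← halg, ← Algebra.smul_def] } with hι
  rw [injective_iff_map_eq_zero]
  intro x hx
  rcases subsingleton_or_nontrivial (A ⊗[R] L) with hS | hN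
  · have h0 : ρ.lTensor A x = 0 := Subsingleton.elim _ _
    exact Module.Flat.lTensor_preserves_injective_linearMap (M := A) ρ hρinj
      (by rw [h0, map_zero])
  · haveI : CharP (A ⊗[R] L) p := by
      have hp0 : ((p : ℕ) : A ⊗[R] L) = 0 := by
        have h1 : ((p : ℕ) : A ⊗[R] L) = algebraMap A (A ⊗[R] L) ((p : ℕ) : A) := by
          rw [map_natCast]
        rw [h1, CharP.cast_eq_zero, map_zero]
      have hdvd : ringChar (A ⊗[R] L) ∣ p := ringChar.dvd hp0
      rcases (Fact.out : p.Prime).eq_one_or_self_of_dvd _ hdvd with h1 | hp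
      · exact absurd h1 (CharP.char_ne_one (A ⊗[R] L) (ringChar (A ⊗[R] L)))
      · exact ringChar.of_eq hp
    have key : ∀ y : A ⊗[R] FrM p D,
        (ρ.lTensor A y) ^ p = ι.lTensor A (phiFr p R A D y) := by
      intro y
      induction y with
      | zero => rw [map_zero, map_zero, map_zero, zero_pow (Nat.Prime.ne_zero Fact.out)]
      | tmul a m =>
        rw [LinearMap.lTensor_tmul, phiFr_tmul, LinearMap.lTensor_tmul,
          Algebra.TensorProduct.tmul_pow]
        congr 1
        show ((frobeniusEquiv L p).symm (ψ ((frMk p).symm m))) ^ p = ψ ((frMk p).symm m)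
        rw [← frobenius_def, frobenius_apply_frobeniusEquiv_symm]
      | add y z hy hz => rw [map_add, add_pow_char, hy, hz, map_add, map_add]
    haveI : IsReduced (A ⊗[R] L) := hred L
    have h0 : (ρ.lTensor A x) ^ p = 0 := by rw [key, hx, map_zero]
    have hnil : IsNilpotent (ρ.lTensor A x) := ⟨p, h0⟩
    have h1 : ρ.lTensor A x = 0 := hnil.eq_zero
    exact Module.Flat.lTensor_preserves_injective_linearMap (M := A) ρ hρinj
      (by rw [h1, map_zero])

end PrimeCase

section Devissage

variable (p : ℕ) [Fact p.Prime] (R A : Type u) [CommRing R] [CommRing A] [Algebra R A]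
  [CharP R p] [CharP A p]

/-- Dévissage: injectivity of the relative Frobenius after tensoring with `R ⧸ N`,
for every ideal `N`, by noetherian induction using associated primes. -/
lemma phiFr_injective_quotient [IsNoetherianRing R] [Module.Flat R A]
    (hred : ∀ (L : Type u) [Field L] [Algebra R L], IsReduced (A ⊗[R] L))
    (N : Ideal R) :
    Function.Injective (phiFr p R A (R ⧸ N)) := by
  have wf : WellFounded ((· > ·) : Ideal R → Ideal R → Prop) :=
    isNoetherian_iff.mp (inferInstance : IsNoetherianRing R)
  induction N using WellFounded.induction wf with
  | _ N IH => ?_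
  by_cases hN : N = ⊤
  · haveI hsub : Subsingleton (R ⧸ N) :=
      Submodule.Quotient.subsingleton_iff.mpr (by rw [hN])
    haveI : Subsingleton (FrM p (R ⧸ N)) := hsub
    intro x y _
    rw [tensor_eq_zero_of_subsingleton x, tensor_eq_zero_of_subsingleton y]
  · haveI : Nontrivial (R ⧸ N) :=
      Submodule.Quotient.nontrivial_iff.mpr hN
    obtain ⟨q, hq⟩ := associatedPrimes.nonempty R (R ⧸ N)
    obtain ⟨hqprime, m', hm'⟩ := isAssociatedPrime_iff.mp hq
    have hm'0 : m' ≠ 0 := by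
      rintro rfl
      refine hqprime.ne_top ?_
      rw [hm', Submodule.colon_singleton_zero]
    obtain ⟨m, hm⟩ := N.mkQ_surjective m'
    set P : Ideal R := N ⊔ Ideal.span {m} with hP
    have hmP : m ∈ P := le_sup_right (α := Ideal R) (Ideal.subset_span rfl)
    have hNP : N < P := by
      refine lt_of_le_of_ne le_sup_left (fun h => hm'0 ?_)
      rw [← hm]
      have hmN : m ∈ N := h ▸ hmP
      rwa [Submodule.mkQ_apply, Submodule.Quotient.mk_eq_zero]
    -- the injection `R ⧸ q → R ⧸ N` sending `1` to `m'`
    have hker : LinearMap.ker (LinearMap.toSpanSingleton R (R ⧸ N) m') = q := by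
      ext r
      rw [LinearMap.mem_ker, LinearMap.toSpanSingleton_apply, hm',
        Submodule.mem_colon_singleton, Submodule.mem_bot]
    set j : (R ⧸ q) →ₗ[R] (R ⧸ N) :=
      Submodule.liftQ q (LinearMap.toSpanSingleton R (R ⧸ N) m') (le_of_eq hker.symm)
    have hjinj : Function.Injective j := by
      rw [← LinearMap.ker_eq_bot]
      exact Submodule.ker_liftQ_eq_bot _ _ _ (le_of_eq hker)
    have hj_mk : ∀ r : R, j (Submodule.Quotient.mk r) = r • m' := fun r => by
      rw [show (Submodule.Quotient.mk r : R ⧸ q) = q.mkQ r from rfl]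
      rw [show j (q.mkQ r) = (j.comp q.mkQ) r from rfl]
      rw [Submodule.liftQ_mkQ]
      exact LinearMap.toSpanSingleton_apply R _ m' r
    -- the projection `R ⧸ N → R ⧸ P`
    set qmap : (R ⧸ N) →ₗ[R] (R ⧸ P) :=
      Submodule.mapQ N P LinearMap.id (fun x hx => hNP.le hx)
    have hqmap_mk : ∀ r : R, qmap (N.mkQ r) = P.mkQ r := fun r => by
      rw [Submodule.mkQ_apply, Submodule.mapQ_apply]
      rfl
    have hqsurj : Function.Surjective qmap := by
      intro z
      obtain ⟨r, rfl⟩ := P.mkQ_surjective z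
      exact ⟨N.mkQ r, hqmap_mk r⟩
    have hexact : Function.Exact j qmap := by
      intro z
      obtain ⟨r, rfl⟩ := N.mkQ_surjective z
      constructor
      · intro hz
        rw [hqmap_mk, Submodule.mkQ_apply, Submodule.Quotient.mk_eq_zero] at hz
        obtain ⟨n, hn, c, hc, hnc⟩ := Submodule.mem_sup.mp hz
        obtain ⟨d, hd⟩ := Ideal.mem_span_singleton'.mp hc
        refine ⟨Submodule.Quotient.mk d, ?_⟩
        rw [hj_mk, ← hm, Submodule.mkQ_apply, ← Submodule.Quotient.mk_smul,
          Submodule.mkQ_apply, Submodule.Quotient.eq]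
        have heq : d • m - r = -n := by
          rw [smul_eq_mul, hd, ← hnc]; ring
        rw [heq]
        exact N.neg_mem hn
      · rintro ⟨c, hc⟩
        obtain ⟨d, rfl⟩ := Submodule.Quotient.mk_surjective _ c
        rw [← hc, hj_mk, map_smul, ← hm, hqmap_mk, Submodule.mkQ_apply]
        rw [show (Submodule.Quotient.mk m : R ⧸ P) = 0 from
          (Submodule.Quotient.mk_eq_zero _).mpr hmP, smul_zero]
    -- transfer everything to Frobenius twists
    have hexactF : Function.Exact (frMap p j) (frMap p qmap) := hexact
    have hqsurjF : Function.Surjective (frMap p qmap) := hqsurj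
    -- the diagram chase
    rw [injective_iff_map_eq_zero]
    intro x hx
    have h1 : phiFr p R A (R ⧸ P) ((frMap p qmap).lTensor A x) = 0 := by
      rw [← phiFr_natural, hx, map_zero]
    have h2 : (frMap p qmap).lTensor A x = 0 :=
      (injective_iff_map_eq_zero _).mp (IH P hNP) _ h1
    have h3 := lTensor_exact (R := R) A hexactF hqsurjF
    obtain ⟨y, hy⟩ := (h3 x).mp h2
    have h4 : j.lTensor A (phiFr p R A (R ⧸ q) y) = 0 := by
      rw [phiFr_natural, hy, hx]
    have h5 : phiFr p R A (R ⧸ q) y = 0 :=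
      Module.Flat.lTensor_preserves_injective_linearMap (M := A) j hjinj
        (by rw [h4, map_zero])
    have h6 : y = 0 :=
      (injective_iff_map_eq_zero _).mp (phiFr_injective_prime p R A hred q hqprime) _ h5
    rw [← hy, h6, map_zero]

end Devissage

/-- **(One direction of Dumitrescu's theorem.)**
Let `R → A` be a flat morphism of noetherian commutative rings of characteristic `p`
with geometrically reduced fibres (i.e. `A ⊗_R L` is reduced for every field `L`
over `R`; every such `L` is an extension of a residue field `κ(𝔭)` of `R`).
Then the relative Frobenius `Frob_{A/R} : A ⊗_{R, Frob} R → A`, `a ⊗ r ↦ a^p · r`,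
is injective. -/
theorem relFrobenius_injective_of_flat_of_geometricallyReducedFibres
    (p : ℕ) [Fact p.Prime] (R A : Type u) [CommRing R] [CommRing A] [Algebra R A]
    [CharP R p] [CharP A p] [IsNoetherianRing R] [IsNoetherianRing A]
    (hflat : Module.Flat R A)
    (hred : ∀ (L : Type u) [Field L] [Algebra R L], IsReduced (A ⊗[R] L)) :
    Function.Injective (relFrobenius p R A) := by
  haveI := hflat
  have hbot := phiFr_injective_quotient p R A hred (⊥ : Ideal R)
  -- the linear isomorphism-like map `Tw p 1 R → FrM p (R ⧸ ⊥)`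
  set t : Tw p 1 R →ₗ[R] FrM p (R ⧸ (⊥ : Ideal R)) :=
    { toFun := fun v => frMk p ((⊥ : Ideal R).mkQ ((twCast p 1 R).symm v))
      map_add' := fun x y => by rw [map_add, map_add, map_add]
      map_smul' := fun r v => by
        dsimp only [RingHom.id_apply]
        rw [tw_smul_def, map_mul, RingEquiv.symm_apply_apply, pow_one, frM_smul_def,
          ← map_smul, smul_eq_mul] } with ht
  have htinj : Function.Injective t := by
    intro a b hab
    have h1 : (⊥ : Ideal R).mkQ ((twCast p 1 R).symm a) =
        (⊥ : Ideal R).mkQ ((twCast p 1 R).symm b) := (frMk p).injective hab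
    have h2 := LinearMap.ker_eq_bot.mp (Submodule.ker_mkQ (⊥ : Ideal R)) h1
    exact (twCast p 1 R).symm.injective h2
  have key : ∀ x : A ⊗[R] Tw p 1 R,
      phiFr p R A (R ⧸ (⊥ : Ideal R)) (t.lTensor A x) =
        (Algebra.TensorProduct.includeLeft :
          A →ₐ[R] A ⊗[R] (R ⧸ (⊥ : Ideal R))) (relFrobenius p R A x) := by
    intro x
    induction x with
    | zero => rw [map_zero, map_zero, map_zero, map_zero]
    | tmul a v =>
      rw [LinearMap.lTensor_tmul, relFrobenius_tmul, phiFr_tmul,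
        Algebra.TensorProduct.includeLeft_apply, ← Algebra.smul_def,
        TensorProduct.smul_tmul]
      congr 1
      show (frMk p).symm (frMk p ((⊥ : Ideal R).mkQ ((twCast p 1 R).symm v))) = _
      rw [AddEquiv.symm_apply_apply, Algebra.smul_def, mul_one,
        Ideal.Quotient.algebraMap_eq, Submodule.mkQ_apply]
      rfl
    | add x y hx hy => rw [map_add, map_add, hx, hy, map_add, map_add]
  rw [injective_iff_map_eq_zero]
  intro x hx
  have h1 : phiFr p R A (R ⧸ (⊥ : Ideal R)) (t.lTensor A x) = 0 := by
    rw [key, hx, map_zero]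
  have h2 : t.lTensor A x = 0 := (injective_iff_map_eq_zero _).mp hbot _ h1
  exact Module.Flat.lTensor_preserves_injective_linearMap (M := A) t htinj
    (by rw [h2, map_zero])
end

section
/- Let R be an F_p-algebra and A an R-algebra, and let M be a projective R-module. Then the natural map (lim_i A^{p^i/R}) ⊗_R M → lim_i (A^{p^i/R} ⊗_R M) is injective. -/
open TensorProduct

set_option maxHeartbeats 1000000
set_option synthInstance.maxHeartbeats 400000

universe u

variable (p i : ℕ) (R : Type u)

variable (A : Type u)

section AuxPi

universe v

variable {S : Type u} [CommRing S] {ι : Type v} {N : ι → Type u}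
  [∀ i, AddCommGroup (N i)] [∀ i, Module S (N i)]

lemma piTensor_injective_free (κ : Type u) :
    Function.Injective (LinearMap.pi (fun i =>
      LinearMap.rTensor (κ →₀ S) (LinearMap.proj (φ := N) i)) :
      (∀ i, N i) ⊗[S] (κ →₀ S) →ₗ[S] ∀ i, (N i) ⊗[S] (κ →₀ S)) := by
  suffices h : ∀ z : (∀ i, N i) ⊗[S] (κ →₀ S),
      (LinearMap.pi (fun i => LinearMap.rTensor (κ →₀ S) (LinearMap.proj (φ := N) i))) z = 0 →
      z = 0 by
    intro a b hab
    rw [← sub_eq_zero]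
    exact h _ (by rw [map_sub]; exact sub_eq_zero_of_eq hab)
  intro z hz
  classical
  have hz' : ∀ i, LinearMap.rTensor (κ →₀ S) (LinearMap.proj (φ := N) i) z = 0 :=
    fun i => congrFun hz i
  have key : ∀ (w : (∀ i, N i) ⊗[S] (κ →₀ S)) (i : ι) (k : κ),
      TensorProduct.finsuppScalarRight S S (N i) κ
        (LinearMap.rTensor (κ →₀ S) (LinearMap.proj (φ := N) i) w) k
      = (TensorProduct.finsuppScalarRight S S (∀ j, N j) κ w k) i := by
    intro w i k
    induction w using TensorProduct.induction_on with
    | zero => simp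
    | tmul x f =>
      simp [TensorProduct.finsuppScalarRight_apply_tmul_apply]
    | add a b ha hb =>
      simp only [map_add, Finsupp.add_apply, Pi.add_apply, ha, hb]
  have hzero : TensorProduct.finsuppScalarRight S S (∀ j, N j) κ z = 0 := by
    ext k i0
    rw [← key z i0 k, hz' i0]
    simp
  exact (TensorProduct.finsuppScalarRight S S (∀ j, N j) κ).injective
    (by rw [hzero, map_zero])

lemma piTensor_injective_proj (M : Type u) [AddCommGroup M] [Module S M]
    [Module.Projective S M] :
    Function.Injective (LinearMap.pi (fun i =>
      LinearMap.rTensor M (LinearMap.proj (φ := N) i)) :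
      (∀ i, N i) ⊗[S] M →ₗ[S] ∀ i, (N i) ⊗[S] M) := by
  obtain ⟨s, hs⟩ := Module.projective_def'.mp (inferInstance : Module.Projective S M)
  suffices h : ∀ z : (∀ i, N i) ⊗[S] M,
      (LinearMap.pi (fun i => LinearMap.rTensor M (LinearMap.proj (φ := N) i))) z = 0 →
      z = 0 by
    intro a b hab
    rw [← sub_eq_zero]
    exact h _ (by rw [map_sub]; exact sub_eq_zero_of_eq hab)
  intro z hz
  have hz' : ∀ i, LinearMap.rTensor M (LinearMap.proj (φ := N) i) z = 0 :=
    fun i => congrFun hz i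
  set z' := LinearMap.lTensor (∀ j, N j) s z with hz'def
  have hcomp : ∀ i, LinearMap.rTensor (M →₀ S) (LinearMap.proj (φ := N) i) z' = 0 := by
    intro i
    have : LinearMap.rTensor (M →₀ S) (LinearMap.proj (φ := N) i) ∘ₗ
        LinearMap.lTensor (∀ j, N j) s
        = LinearMap.lTensor (N i) s ∘ₗ LinearMap.rTensor M (LinearMap.proj (φ := N) i) := by
      rw [LinearMap.rTensor_comp_lTensor, LinearMap.lTensor_comp_rTensor]
    calc LinearMap.rTensor (M →₀ S) (LinearMap.proj (φ := N) i) z'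
        = (LinearMap.rTensor (M →₀ S) (LinearMap.proj (φ := N) i) ∘ₗ
            LinearMap.lTensor (∀ j, N j) s) z := rfl
      _ = LinearMap.lTensor (N i) s (LinearMap.rTensor M (LinearMap.proj (φ := N) i) z) := by
            rw [this]; rfl
      _ = 0 := by rw [hz' i, map_zero]
  have hzfree : z' = 0 := by
    apply piTensor_injective_free (N := N) M
    rw [map_zero]
    ext i
    exact hcomp i
  have : LinearMap.lTensor (∀ j, N j) (Finsupp.linearCombination S (id : M → M)) z' = z := by
    rw [hz'def, ← LinearMap.comp_apply, ← LinearMap.lTensor_comp, hs, LinearMap.lTensor_id,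
      LinearMap.id_apply]
  rw [← this, hzfree, map_zero]

end AuxPi

/-- **Injectivity of base change of preperfection along a projective module.**
For an `F_p`-algebra `R`, an `R`-algebra `A` and a projective `R`-module `M`,
the natural map `(lim_i A^{p^i/R}) ⊗_R M → lim_i (A^{p^i/R} ⊗_R M)` is injective. -/
theorem basechange_injective_of_projective
    (p : ℕ) [Fact p.Prime] (R A M : Type u) [CommRing R] [CommRing A] [Algebra R A]
    [CharP R p] [CharP A p] [AddCommGroup M] [Module R M] [Module.Projective R M] :
    Function.Injective (basechange p R A M) := by
  have hfact : basechange p R A M =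
      (LinearMap.pi (fun i => LinearMap.rTensor M
          (LinearMap.proj (φ := fun i => FTw p i R A) i))) ∘ₗ
        LinearMap.rTensor M (prePerfection p R A).val.toLinearMap := by
    apply TensorProduct.ext'
    intro x m
    ext i
    rfl
  rw [hfact]
  exact (piTensor_injective_proj (N := fun i => FTw p i R A) M).comp
    (Module.Flat.rTensor_preserves_injective_linearMap _ Subtype.val_injective)
end

section
/- Let R be an F_p-algebra such that its absolute Frobenius Frob : R → R makes R a finite locally free module over itself. Then for any R-algebra A, the preperfection A^{p^∞/R} = lim_i A^{p^i/R} is a perfect R-algebra, i.e., its relative Frobenius over R is an isomorphism. -/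
open TensorProduct

set_option maxHeartbeats 1000000
set_option synthInstance.maxHeartbeats 400000

universe u

variable (p i : ℕ) (R : Type u)

variable (A : Type u)

section MyAux

variable (p i : ℕ) (R A : Type u) [CommRing R] [CommRing A] [Algebra R A]
  [Fact p.Prime] [CharP R p] [CharP A p]

lemma twCast_apply' [CommRing R] (r : R) : twCast p i R r = r := rfl

lemma twCast_symm_apply' [CommRing R] (x : Tw p i R) : (twCast p i R).symm x = x := rfl

lemma my_add_pow {S : Type u} (p : ℕ) [Fact p.Prime] [CommRing S] (hp : ((p : ℕ) : S) = 0)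
    (a b : S) : (a + b) ^ p = a ^ p + b ^ p := by
  rcases subsingleton_or_nontrivial S with h | h
  · exact Subsingleton.elim _ _
  · have hdvd : ringChar S ∣ p := (ringChar.spec S p).mp hp
    rcases ((Fact.out : p.Prime).eq_one_or_self_of_dvd _ hdvd) with h1 | h1
    · exact absurd h1 (CharP.char_ne_one S (ringChar S))
    · haveI : CharP S p := h1 ▸ ringChar.charP S
      exact add_pow_char a b p

lemma tensor_p_zero : ((p : ℕ) : A ⊗[R] Tw p i R) = 0 := by
  rw [← map_natCast (Algebra.TensorProduct.includeLeftRingHom (R := R) (A := A)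
    (B := Tw p i R)) p, CharP.cast_eq_zero A p, map_zero]

lemma ftw_smul_def (r : R) (z : FTw p i R A) :
    r • z = algebraMap R (FTw p i R A) r * z := Algebra.smul_def r z

/-- The Frobenius on the right tensor factor, `a ⊗ x ↦ a ⊗ x^p`. -/
noncomputable def tauAddHom : (A ⊗[R] Tw p i R) →+ (A ⊗[R] Tw p (i + 1) R) :=
  TensorProduct.liftAddHom
    { toFun := fun a =>
        { toFun := fun x => a ⊗ₜ[R] (twCast p (i + 1) R (((twCast p i R).symm x) ^ p))
          map_zero' := by simp [zero_pow (Nat.Prime.ne_zero (Fact.out : p.Prime))]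
          map_add' := by intro x y; simp [add_pow_char, TensorProduct.tmul_add] }
      map_zero' := by ext x; simp
      map_add' := by intro a b; ext x; simp [TensorProduct.add_tmul] }
    (by
      intro r a x
      simp only [AddMonoidHom.coe_mk, ZeroHom.coe_mk]
      rw [TensorProduct.smul_tmul]
      congr 1
      rw [tw_smul_def, tw_smul_def]
      simp only [twCast_apply', twCast_symm_apply']
      change (r ^ p ^ (i + 1) * (show R from x) ^ p : R) = ((r ^ p ^ i * (show R from x)) ^ p : R)
      rw [mul_pow, ← pow_mul, ← pow_succ])

@[simp] lemma tauAddHom_tmul (a : A) (x : Tw p i R) :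
    tauAddHom p i R A (a ⊗ₜ[R] x) =
      a ⊗ₜ[R] (twCast p (i + 1) R (((twCast p i R).symm x) ^ p)) :=
  TensorProduct.liftAddHom_tmul _ _ _ _

lemma tauAddHom_mul (z w : A ⊗[R] Tw p i R) :
    tauAddHom p i R A (z * w) = tauAddHom p i R A z * tauAddHom p i R A w := by
  induction z using TensorProduct.induction_on with
  | zero => simp
  | tmul a x =>
    induction w using TensorProduct.induction_on with
    | zero => simp
    | tmul b y =>
      rw [Algebra.TensorProduct.tmul_mul_tmul, tauAddHom_tmul, tauAddHom_tmul, tauAddHom_tmul,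
        Algebra.TensorProduct.tmul_mul_tmul]
      simp [mul_pow]
    | add w₁ w₂ h₁ h₂ => rw [mul_add, map_add, h₁, h₂, map_add, mul_add]
  | add z₁ z₂ h₁ h₂ => rw [add_mul, map_add, h₁, h₂, map_add, add_mul]

/-- The identity, as a map `A ⊗[R] Tw p i R → FTw p i R A`.  (Note that `FTw p i R A`
carries a *different* `R`-module structure, via its algebra structure through the right
factor, than the tensor product it is defined as.) -/
noncomputable def toFTw (z : A ⊗[R] Tw p i R) : FTw p i R A := z

@[simp] lemma toFTw_zero : toFTw p i R A 0 = 0 := rfl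

@[simp] lemma toFTw_add (z w : A ⊗[R] Tw p i R) :
    toFTw p i R A (z + w) = toFTw p i R A z + toFTw p i R A w := rfl

@[simp] lemma tauAddHom_toFTw (z : A ⊗[R] Tw p i R) :
    tauAddHom p i R A (toFTw p i R A z) = tauAddHom p i R A z := rfl

@[simp] lemma transAddHom_toFTw (z : A ⊗[R] Tw p (i + 1) R) :
    transAddHom p i R A (toFTw p (i + 1) R A z) = transAddHom p i R A z := rfl

lemma toFTw_smul (r : R) (z : A ⊗[R] Tw p i R) :
    r • toFTw p i R A z = toFTw p i R A (((1 : A) ⊗ₜ[R] twCast p i R r) * z) := rfl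

lemma tauAddHom_smul (r : R) (z : FTw p i R A) :
    tauAddHom p i R A (r • z)
      = tauAddHom p i R A z * ((1 : A) ⊗ₜ[R] (twCast p (i + 1) R (r ^ p))) := by
  obtain ⟨z', rfl⟩ : ∃ z', toFTw p i R A z' = z := ⟨z, rfl⟩
  rw [toFTw_smul, tauAddHom_toFTw, tauAddHom_toFTw, tauAddHom_mul, tauAddHom_tmul]
  simp [mul_comm]

/-- The isomorphism `A^{p^i/R} ⊗_{R,Frob} R ≅ A^{p^{i+1}/R}`, `(a ⊗ x) ⊗ y ↦ a ⊗ x^p y`,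
as an additive map. -/
noncomputable def gAddHom : (FTw p i R A ⊗[R] Tw p 1 R) →+ (A ⊗[R] Tw p (i + 1) R) :=
  TensorProduct.liftAddHom
    { toFun := fun z =>
        { toFun := fun y =>
            tauAddHom p i R A z *
              ((1 : A) ⊗ₜ[R] (twCast p (i + 1) R ((twCast p 1 R).symm y)))
          map_zero' := by simp
          map_add' := by intro y y'; simp [TensorProduct.tmul_add, mul_add] }
      map_zero' := by ext y; simp; erw [map_zero, zero_mul]
      map_add' := by intro z w; ext y; simp [add_mul]; erw [map_add, add_mul] }
    (by
      intro r z y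
      simp only [AddMonoidHom.coe_mk, ZeroHom.coe_mk]
      rw [tauAddHom_smul, tw_smul_def]
      simp only [twCast_apply', twCast_symm_apply', pow_one]
      rw [mul_assoc]
      erw [Algebra.TensorProduct.tmul_mul_tmul, one_mul]
      rfl)

@[simp] lemma gAddHom_tmul (z : FTw p i R A) (y : Tw p 1 R) :
    gAddHom p i R A (z ⊗ₜ[R] y) =
      tauAddHom p i R A z *
        ((1 : A) ⊗ₜ[R] (twCast p (i + 1) R ((twCast p 1 R).symm y))) :=
  TensorProduct.liftAddHom_tmul _ _ _ _

/-- The inverse of `gAddHom`, `a ⊗ s ↦ (a ⊗ 1) ⊗ s`. -/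
noncomputable def hAddHom : (A ⊗[R] Tw p (i + 1) R) →+ (FTw p i R A ⊗[R] Tw p 1 R) :=
  TensorProduct.liftAddHom
    { toFun := fun a =>
        { toFun := fun s =>
            (toFTw p i R A (a ⊗ₜ[R] (1 : Tw p i R))) ⊗ₜ[R]
              (twCast p 1 R ((twCast p (i + 1) R).symm s))
          map_zero' := by simp
          map_add' := by intro s t; simp [TensorProduct.tmul_add] }
      map_zero' := by
        ext s
        simp [TensorProduct.zero_tmul]
      map_add' := by
        intro a b
        ext s
        simp [TensorProduct.add_tmul] }
    (by
      intro r a s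
      simp only [AddMonoidHom.coe_mk, ZeroHom.coe_mk]
      have h1 : ((r • a) ⊗ₜ[R] (1 : Tw p i R) : A ⊗[R] Tw p i R)
          = ((1 : A) ⊗ₜ[R] twCast p i R (r ^ p ^ i)) * (a ⊗ₜ[R] (1 : Tw p i R)) := by
        rw [TensorProduct.smul_tmul, tw_smul_def, mul_one, Algebra.TensorProduct.tmul_mul_tmul,
          one_mul, mul_one]
      rw [h1, ← toFTw_smul, TensorProduct.smul_tmul]
      congr 1
      rw [tw_smul_def, tw_smul_def]
      simp only [twCast_apply', twCast_symm_apply', pow_one]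
      rw [← pow_mul, ← pow_succ]
      rfl)

@[simp] lemma hAddHom_tmul (a : A) (s : Tw p (i + 1) R) :
    hAddHom p i R A (a ⊗ₜ[R] s) =
      (toFTw p i R A (a ⊗ₜ[R] (1 : Tw p i R))) ⊗ₜ[R]
        (twCast p 1 R ((twCast p (i + 1) R).symm s)) :=
  TensorProduct.liftAddHom_tmul _ _ _ _

lemma g_h (z : A ⊗[R] Tw p (i + 1) R) :
    gAddHom p i R A (hAddHom p i R A z) = z := by
  induction z using TensorProduct.induction_on with
  | zero => simp
  | tmul a s =>
    rw [hAddHom_tmul, gAddHom_tmul, tauAddHom_toFTw, tauAddHom_tmul,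
      Algebra.TensorProduct.tmul_mul_tmul, mul_one]
    simp
  | add z w hz hw => rw [map_add, map_add, hz, hw]

lemma h_g (z : FTw p i R A ⊗[R] Tw p 1 R) :
    hAddHom p i R A (gAddHom p i R A z) = z := by
  induction z using TensorProduct.induction_on with
  | zero => simp
  | tmul w y =>
    obtain ⟨w', rfl⟩ : ∃ w', toFTw p i R A w' = w := ⟨w, rfl⟩
    induction w' using TensorProduct.induction_on with
    | zero => simp [TensorProduct.zero_tmul]
    | tmul a x =>
      rw [gAddHom_tmul, tauAddHom_toFTw, tauAddHom_tmul, Algebra.TensorProduct.tmul_mul_tmul,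
        mul_one, hAddHom_tmul]
      have h2 : (a ⊗ₜ[R] x : A ⊗[R] Tw p i R)
          = ((1 : A) ⊗ₜ[R] twCast p i R ((twCast p i R).symm x)) * (a ⊗ₜ[R] (1 : Tw p i R)) := by
        rw [Algebra.TensorProduct.tmul_mul_tmul, one_mul, mul_one]
        rfl
      conv_rhs => rw [h2, ← toFTw_smul, TensorProduct.smul_tmul]
      congr 1
      rw [tw_smul_def]
      simp [pow_one]
    | add w₁ w₂ h₁ h₂ =>
      rw [toFTw_add, TensorProduct.add_tmul, map_add, map_add, h₁, h₂]
  | add z w hz hw => rw [map_add, map_add, hz, hw]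

lemma g_trans (z : FTw p (i + 1) R A ⊗[R] Tw p 1 R) :
    gAddHom p i R A
        (LinearMap.rTensor (Tw p 1 R) (transAlgHom p i R A).toLinearMap z)
      = transAlgHom p (i + 1) R A (gAddHom p (i + 1) R A z) := by
  induction z using TensorProduct.induction_on with
  | zero => simp; exact (map_zero _).symm
  | tmul w y =>
    obtain ⟨w', rfl⟩ : ∃ w', toFTw p (i + 1) R A w' = w := ⟨w, rfl⟩
    induction w' using TensorProduct.induction_on with
    | zero => simp [TensorProduct.zero_tmul]; exact (map_zero _).symm
    | tmul a x =>
      rw [LinearMap.rTensor_tmul]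
      rw [show (transAlgHom p i R A).toLinearMap (toFTw p (i + 1) R A (a ⊗ₜ[R] x))
            = toFTw p i R A
                ((a ^ p) ⊗ₜ[R] (twCast p i R ((twCast p (i + 1) R).symm x))) from
          transAddHom_tmul p i R A a x]
      rw [gAddHom_tmul, gAddHom_tmul, tauAddHom_toFTw, tauAddHom_toFTw, tauAddHom_tmul,
        tauAddHom_tmul]
      erw [transAlgHom_apply]
      rw [Algebra.TensorProduct.tmul_mul_tmul,
        Algebra.TensorProduct.tmul_mul_tmul, mul_one, mul_one, transAddHom_tmul]
      simp
    | add w₁ w₂ h₁ h₂ =>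
      rw [toFTw_add, TensorProduct.add_tmul, map_add, map_add, map_add, h₁, h₂]
      erw [map_add]
      rfl
  | add z w hz hw =>
    rw [map_add, map_add, map_add, hz, hw]
    erw [map_add]
    rfl

lemma frob_formula (v : Tw p 1 R) (z : A ⊗[R] Tw p (i + 1) R) :
    gAddHom p i R A ((toFTw p i R A (transAddHom p i R A z)) ⊗ₜ[R] v)
      = ((1 : A) ⊗ₜ[R] (twCast p (i + 1) R ((twCast p 1 R).symm v))) * z ^ p := by
  induction z using TensorProduct.induction_on with
  | zero =>
    rw [map_zero, zero_pow (Nat.Prime.ne_zero (Fact.out : p.Prime)), mul_zero]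
    simp [TensorProduct.zero_tmul]
  | tmul a x =>
    rw [transAddHom_tmul, gAddHom_tmul, tauAddHom_toFTw, tauAddHom_tmul,
      Algebra.TensorProduct.tmul_pow, Algebra.TensorProduct.tmul_mul_tmul,
      Algebra.TensorProduct.tmul_mul_tmul, one_mul]
    simp [mul_comm]
  | add z w hz hw =>
    rw [map_add, toFTw_add, TensorProduct.add_tmul, map_add, hz, hw,
      my_add_pow p (tensor_p_zero p (i + 1) R A), mul_add]

end MyAux





section Contraction

variable {R : Type u} [CommRing R]

/-- Reconstruction of a tensor from its contractions against a finite dual family. -/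
lemma recon {M N : Type u} [AddCommGroup M] [Module R M] [AddCommGroup N] [Module R N]
    {n : ℕ} (x : Fin n → M) (f : Fin n → (M →ₗ[R] R))
    (hxf : ∀ m, ∑ k, f k m • x k = m) (z : N ⊗[R] M) :
    ∑ k, (TensorProduct.rid R N ((f k).lTensor N z)) ⊗ₜ[R] x k = z := by
  induction z using TensorProduct.induction_on with
  | zero => simp
  | tmul w m =>
    simp only [LinearMap.lTensor_tmul, TensorProduct.rid_tmul]
    calc ∑ k, (f k m • w) ⊗ₜ[R] x k = ∑ k, w ⊗ₜ[R] (f k m • x k) := by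
          exact Finset.sum_congr rfl fun k _ => TensorProduct.smul_tmul _ _ _
      _ = w ⊗ₜ[R] m := by rw [← TensorProduct.tmul_sum, hxf]
  | add z w hz hw =>
    simp only [map_add, TensorProduct.add_tmul, Finset.sum_add_distrib, hz, hw]

/-- Contraction is natural in the other tensor factor. -/
lemma ctr_natural {M N N' : Type u} [AddCommGroup M] [Module R M] [AddCommGroup N]
    [Module R N] [AddCommGroup N'] [Module R N'] (φ : N →ₗ[R] N') (f : M →ₗ[R] R)
    (z : N ⊗[R] M) :
    TensorProduct.rid R N' (f.lTensor N' (φ.rTensor M z))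
      = φ (TensorProduct.rid R N (f.lTensor N z)) := by
  induction z using TensorProduct.induction_on with
  | zero => simp
  | tmul w m => simp
  | add z w hz hw => simp [hz, hw]

end Contraction

section MyAux2

variable (p : ℕ) (R A : Type u) [CommRing R] [CommRing A] [Algebra R A]
  [Fact p.Prime] [CharP R p] [CharP A p]

lemma basechange_tmul (M : Type u) [AddCommGroup M] [Module R M]
    (b : ↥(prePerfection p R A)) (m : M) (i : ℕ) :
    basechange p R A M (b ⊗ₜ[R] m) i = ((b : ∀ j, FTw p j R A) i) ⊗ₜ[R] m := rfl

lemma bc_ctr (M : Type u) [AddCommGroup M] [Module R M] (φ : M →ₗ[R] R)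
    (t : ↥(prePerfection p R A) ⊗[R] M) (i : ℕ) :
    ((TensorProduct.rid R ↥(prePerfection p R A)) (φ.lTensor _ t) : ∀ j, FTw p j R A) i
      = TensorProduct.rid R (FTw p i R A) (φ.lTensor (FTw p i R A)
          (basechange p R A M t i)) := by
  induction t using TensorProduct.induction_on with
  | zero => simp
  | tmul b m =>
    rw [basechange_tmul]
    simp only [LinearMap.lTensor_tmul, TensorProduct.rid_tmul]
    rfl
  | add t t' ht ht' =>
    simp only [map_add, Pi.add_apply, AddMemClass.coe_add, ht, ht']

lemma key [CharP (↥(prePerfection p R A)) p]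
    (t : ↥(prePerfection p R A) ⊗[R] Tw p 1 R) (i : ℕ) :
    gAddHom p i R A (basechange p R A (Tw p 1 R) t i)
      = ((relFrobenius p R (↥(prePerfection p R A)) t : ∀ j, FTw p j R A)) (i + 1) := by
  induction t using TensorProduct.induction_on with
  | zero => simp; rfl
  | tmul b v =>
    rw [basechange_tmul, relFrobenius_tmul]
    have hb : ∀ j, transAlgHom p j R A ((b : ∀ j, FTw p j R A) (j + 1))
        = (b : ∀ j, FTw p j R A) j := b.2
    have h1 : (b : ∀ j, FTw p j R A) i
        = toFTw p i R A (transAddHom p i R A ((b : ∀ j, FTw p j R A) (i + 1))) := (hb i).symm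
    rw [h1]
    erw [frob_formula]
    rw [MulMemClass.coe_mul, SubmonoidClass.coe_pow, Pi.mul_apply,
      Pi.pow_apply]
    rfl
  | add t t' ht ht' =>
    simp only [map_add, Pi.add_apply, AddMemClass.coe_add, ht, ht']
    rfl

end MyAux2


/-- **Preperfection is perfect when Frobenius is finite locally free.**
Let `R` be an `F_p`-algebra whose absolute Frobenius makes `R` a finite locally
free (= finite projective) module over itself (the Frobenius module structure is
encoded by `Tw p 1 R`).  Then for any `R`-algebra `A`, the preperfection
`A^{p^∞/R} = lim_i A^{p^i/R}` is a perfect `R`-algebra: its relative Frobenius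
`B ⊗_{R, Frob} R → B`, `b ⊗ r ↦ b^p · r`, is an isomorphism. -/
theorem prePerfection_isRelativelyPerfect_of_frobenius_finite_locally_free
    (p : ℕ) [Fact p.Prime] (R A : Type u) [CommRing R] [CommRing A] [Algebra R A]
    [CharP R p] [CharP A p]
    [Module.Finite R (Tw p 1 R)] [Module.Projective R (Tw p 1 R)]
    [CharP (↥(prePerfection p R A)) p] :
    Function.Bijective (relFrobenius p R (↥(prePerfection p R A))) := by
  classical
  obtain ⟨n, π, s, -, -, hcomp⟩ := Module.Finite.exists_comp_eq_id_of_projective R (Tw p 1 R)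
  set x : Fin n → Tw p 1 R := fun k => π (Pi.single k 1) with hx
  set f : Fin n → (Tw p 1 R →ₗ[R] R) := fun k => (LinearMap.proj k).comp s with hf
  have hxf : ∀ m, ∑ k, f k m • x k = m := by
    intro m
    have h1 : ∑ k, f k m • x k = π (∑ k, Pi.single k (s m k)) := by
      rw [map_sum]
      refine Finset.sum_congr rfl fun k _ => ?_
      rw [← map_smul]
      congr 1
      rw [← Pi.single_smul, smul_eq_mul, mul_one]
      rfl
    rw [h1, Finset.univ_sum_single]
    have := LinearMap.congr_fun hcomp m
    simpa using this
  constructor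
  · -- injectivity
    rw [injective_iff_map_eq_zero]
    intro t ht
    have hbc : ∀ i, basechange p R A (Tw p 1 R) t i = 0 := by
      intro i
      have hginj : Function.Injective (gAddHom p i R A) :=
        Function.LeftInverse.injective (h_g p i R A)
      apply hginj
      rw [key p R A t i, ht, map_zero]
      simp
      rfl
    have hc : ∀ k, (TensorProduct.rid R (↥(prePerfection p R A))
        ((f k).lTensor _ t)) = (0 : ↥(prePerfection p R A)) := by
      intro k
      apply Subtype.ext; funext i
      have h0 := bc_ctr p R A (Tw p 1 R) (f k) t i
      rw [hbc i] at h0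
      simpa using h0
    rw [← recon x f hxf t]
    refine Finset.sum_eq_zero fun k _ => ?_
    rw [hc k, TensorProduct.zero_tmul]
  · -- surjectivity
    intro b
    have hb : ∀ j, transAlgHom p j R A ((b : ∀ j, FTw p j R A) (j + 1))
        = (b : ∀ j, FTw p j R A) j := b.2
    set y : ∀ i, FTw p i R A ⊗[R] Tw p 1 R :=
      fun i => hAddHom p i R A ((b : ∀ j, FTw p j R A) (i + 1)) with hy
    have hyc : ∀ i, LinearMap.rTensor (Tw p 1 R) (transAlgHom p i R A).toLinearMap (y (i + 1))
        = y i := by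
      intro i
      have hginj : Function.Injective (gAddHom p i R A) :=
        Function.LeftInverse.injective (h_g p i R A)
      apply hginj
      rw [g_trans, hy]
      simp only []
      erw [g_h, g_h]
      exact hb (i + 1)
    have hmem : ∀ k, (fun i => TensorProduct.rid R (FTw p i R A)
        ((f k).lTensor (FTw p i R A) (y i))) ∈ prePerfection p R A := by
      intro k i
      show transAlgHom p i R A (TensorProduct.rid R (FTw p (i + 1) R A)
          ((f k).lTensor _ (y (i + 1))))
        = TensorProduct.rid R (FTw p i R A) ((f k).lTensor (FTw p i R A) (y i))
      conv_rhs => rw [← hyc i, ctr_natural]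
      rfl
    refine ⟨∑ k, (⟨_, hmem k⟩ : ↥(prePerfection p R A)) ⊗ₜ[R] x k, ?_⟩
    have hbt : ∀ i, basechange p R A (Tw p 1 R)
        (∑ k, (⟨_, hmem k⟩ : ↥(prePerfection p R A)) ⊗ₜ[R] x k) i = y i := by
      intro i
      rw [map_sum, Finset.sum_apply]
      calc ∑ k, basechange p R A (Tw p 1 R)
              ((⟨_, hmem k⟩ : ↥(prePerfection p R A)) ⊗ₜ[R] x k) i
          = ∑ k, (TensorProduct.rid R (FTw p i R A)
              ((f k).lTensor (FTw p i R A) (y i))) ⊗ₜ[R] x k := by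
            exact Finset.sum_congr rfl fun k _ => by rw [basechange_tmul]
        _ = y i := recon x f hxf (y i)
    have hval : ∀ i, ((relFrobenius p R (↥(prePerfection p R A))
        (∑ k, (⟨_, hmem k⟩ : ↥(prePerfection p R A)) ⊗ₜ[R] x k) : ∀ j, FTw p j R A)) (i + 1)
        = (b : ∀ j, FTw p j R A) (i + 1) := by
      intro i
      rw [← key p R A _ i, hbt i, hy]
      exact g_h p i R A _
    refine Subtype.ext (funext fun j => ?_)
    cases j with
    | zero =>
      have h2 := (relFrobenius p R (↥(prePerfection p R A))
        (∑ k, (⟨_, hmem k⟩ : ↥(prePerfection p R A)) ⊗ₜ[R] x k)).2 0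
      have h3 := hb 0
      rw [← h2, ← h3, hval 0]
    | succ i => exact hval i
end

section
/- Let k be an algebraically closed field of characteristic p and A a finitely generated reduced k-algebra with connected spectrum. Then every element x of A that is an infinitely divisible p-th power (i.e., for every n ≥ 0 there exists x_n ∈ A with x = x_n^{p^n}) lies in k. Equivalently, the intersection ⋂_{n≥0} A^{p^n} of the images of the iterated Frobenius equals k. -/
/-- Let `k` be an algebraically closed field of characteristic `p` and `A` a
finitely generated reduced `k`-algebra with connected spectrum (no nontrivial
idempotents).  Then every element of `A` which is an infinitely divisible
`p`-th power lies in (the image of) `k`; equivalently `⋂ₙ A^{pⁿ} = k`. -/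
theorem iInf_frobenius_images_eq_constants
    (p : ℕ) [Fact p.Prime] (k A : Type*) [Field k] [IsAlgClosed k] [CharP k p]
    [CommRing A] [IsReduced A] [Algebra k A] [Algebra.FiniteType k A]
    (hconn : ∀ e : A, e * e = e → e = 0 ∨ e = 1) :
    ∀ x : A, (∀ n : ℕ, ∃ y : A, y ^ p ^ n = x) → x ∈ (algebraMap k A).range := by
  intro x hx
  by_cases hA : Subsingleton A
  · exact ⟨0, Subsingleton.elim _ _⟩
  haveI : Nontrivial A := not_subsingleton_iff_nontrivial.mp hA
  have hp1 : 1 < p := (Fact.out : p.Prime).one_lt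
  haveI : CharP A p := charP_of_injective_algebraMap (algebraMap k A).injective p
  haveI : IsNoetherianRing A := Algebra.FiniteType.isNoetherianRing k A
  -- pick a maximal ideal and a constant λ₀ with x ≡ λ₀ mod m
  obtain ⟨m, hm⟩ := Ideal.exists_maximal A
  letI : Field (A ⧸ m) := Ideal.Quotient.field m
  haveI : Algebra.FiniteType k (A ⧸ m) :=
    Algebra.FiniteType.of_surjective (Ideal.Quotient.mkₐ k m)
      Ideal.Quotient.mk_surjective
  haveI : Module.Finite k (A ⧸ m) := finite_of_finite_type_of_isJacobsonRing k (A ⧸ m)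
  haveI : Algebra.IsIntegral k (A ⧸ m) := Algebra.IsIntegral.of_finite _ _
  obtain ⟨l, hl⟩ := (IsAlgClosed.algebraMap_bijective_of_isIntegral
    (k := k) (K := A ⧸ m)).2 (Ideal.Quotient.mk m x)
  set u : A := x - algebraMap k A l with hu
  have hum : u ∈ m := by
    have h0 : Ideal.Quotient.mk m u = 0 := by
      have : (algebraMap k (A ⧸ m)) l = Ideal.Quotient.mk m (algebraMap k A l) := by
        rw [IsScalarTower.algebraMap_apply k A (A ⧸ m)]; rfl
      rw [hu, map_sub, ← hl, this, sub_self]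
    exact Ideal.Quotient.eq_zero_iff_mem.mp h0
  -- u is infinitely p-divisible
  have hud : ∀ n : ℕ, ∃ z : A, z ^ p ^ n = u := by
    intro n
    obtain ⟨y, hy⟩ := hx n
    obtain ⟨μ, hμ⟩ := IsAlgClosed.exists_pow_nat_eq l (n := p ^ n)
      (pow_pos (by omega) n)
    refine ⟨y - algebraMap k A μ, ?_⟩
    rw [sub_pow_char_pow, hy, ← map_pow, hμ]
  -- Krull intersection: u is locally zero wherever it is not a unit
  have key : ∀ n : Ideal A, n.IsMaximal → u ∈ n → ∃ s ∉ n, s * u = 0 := by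
    intro n hn hun
    haveI : n.IsPrime := hn.isPrime
    have hmem : ∀ i : ℕ, u ∈ n ^ i := by
      intro i
      obtain ⟨z, hz⟩ := hud i
      have hzn : z ∈ n := by
        have : z ^ p ^ i ∈ n := hz ▸ hun
        exact Ideal.IsPrime.mem_of_pow_mem ‹n.IsPrime› _ this
      have h1 : z ^ p ^ i ∈ n ^ p ^ i := Ideal.pow_mem_pow hzn _
      have h2 : (n : Ideal A) ^ p ^ i ≤ n ^ i :=
        Ideal.pow_le_pow_right (le_of_lt (Nat.lt_pow_self (n := i) hp1))
      exact hz ▸ h2 h1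
    set L := Localization.AtPrime n
    haveI : IsNoetherianRing L :=
      IsLocalization.isNoetherianRing n.primeCompl L ‹IsNoetherianRing A›
    have hloc : algebraMap A L u = 0 := by
      have hbot : algebraMap A L u ∈ (⊥ : Ideal L) := by
        rw [← Ideal.iInf_pow_eq_bot_of_isLocalRing (IsLocalRing.maximalIdeal L)
          (Ideal.IsMaximal.ne_top inferInstance)]
        refine Ideal.mem_iInf.mpr fun i => ?_
        have h1 : algebraMap A L u ∈ (n.map (algebraMap A L)) ^ i := by
          rw [← Ideal.map_pow]; exact Ideal.mem_map_of_mem _ (hmem i)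
        have h2 : n.map (algebraMap A L) ≤ IsLocalRing.maximalIdeal L :=
          le_of_eq (Localization.AtPrime.map_eq_maximalIdeal)
        exact Ideal.pow_right_mono h2 i h1
      simpa using hbot
    obtain ⟨s, hs⟩ := (IsLocalization.map_eq_zero_iff n.primeCompl L u).mp hloc
    exact ⟨s, s.2, hs⟩
  -- span{u} ⊔ Ann(u) = ⊤
  have htop : Ideal.span {u} ⊔ (Submodule.span A {u}).annihilator = ⊤ := by
    by_contra h
    obtain ⟨n, hn, hle⟩ := Ideal.exists_le_maximal _ h
    have hun : u ∈ n :=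
      hle (le_sup_left (α := Ideal A) (Ideal.subset_span rfl))
    obtain ⟨s, hs, hsu⟩ := key n hn hun
    exact hs (hle (le_sup_right (α := Ideal A)
      ((Submodule.mem_annihilator_span_singleton u s).mpr (by rwa [smul_eq_mul]))))
  obtain ⟨a, ha, b, hb, hab⟩ := Submodule.mem_sup.mp
    (htop ▸ Submodule.mem_top : (1 : A) ∈ Ideal.span {u} ⊔ (Submodule.span A {u}).annihilator)
  obtain ⟨c, hc⟩ := Ideal.mem_span_singleton'.mp ha
  have hbu : b * u = 0 := by
    have := (Submodule.mem_annihilator_span_singleton u b).mp hb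
    rwa [smul_eq_mul] at this
  have hu1 : u = c * u * u := by linear_combination (-u) * hab - u * hc + hbu
  have hidem : (c * u) * (c * u) = c * u := by linear_combination (-c) * hu1
  rcases hconn (c * u) hidem with h0 | h1
  · refine ⟨l, ?_⟩
    have h2 : u = 0 := by rw [hu1, h0, zero_mul]
    rw [hu, sub_eq_zero] at h2
    exact h2.symm
  · exact absurd (m.eq_top_iff_one.mpr (h1 ▸ Ideal.mul_mem_left m c hum))
      (Ideal.IsMaximal.ne_top hm)
end

section
/- Let A be a noetherian commutative ring with connected spectrum (no nontrivial idempotents) of characteristic p, and let x ∈ ⋂_{n≥0} A^{p^n}, say x = x_n^{p^n} for each n. Then x = 0 or x is a unit of A. -/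
/-- Let `A` be a noetherian commutative ring of characteristic `p` with
connected spectrum (no nontrivial idempotents) and let `x ∈ ⋂ₙ A^{pⁿ}` be an
infinitely divisible `p`-th power.  Then `x = 0` or `x` is a unit of `A`. -/
theorem zero_or_unit_of_mem_iInf_frobenius_images
    (p : ℕ) [Fact p.Prime] (A : Type*) [CommRing A] [CharP A p]
    [IsNoetherianRing A]
    (hconn : ∀ e : A, e * e = e → e = 0 ∨ e = 1)
    (x : A) (hx : ∀ n : ℕ, ∃ y : A, y ^ p ^ n = x) :
    x = 0 ∨ IsUnit x := by
  classical
  have hp2 : 2 ≤ p := (Fact.out : p.Prime).two_le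
  set N : Ideal A := nilradical A with hN
  have hxsp : ∀ n, (hx n).choose ^ p ^ n = x := fun n => (hx n).choose_spec
  set xs : ℕ → A := fun n => (hx n).choose with hxs
  -- key: xs n - (xs (n+1))^p is nilpotent
  have hkey : ∀ n, xs n - (xs (n+1)) ^ p ∈ N := by
    intro n
    rw [hN, mem_nilradical]
    refine ⟨p ^ n, ?_⟩
    rw [sub_pow_char_pow, ← pow_mul, ← pow_succ', hxsp, hxsp, sub_self]
  -- ascending chain
  have hmono : Monotone (fun n => Ideal.span {xs n} ⊔ N) := by
    apply monotone_nat_of_le_succ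
    intro n
    refine sup_le ?_ le_sup_right
    rw [Ideal.span_le, Set.singleton_subset_iff]
    have h1 : xs n = (xs (n+1)) ^ (p-1) * xs (n+1) + (xs n - xs (n+1) ^ p) := by
      rw [← pow_succ, Nat.sub_add_cancel (by omega)]; ring
    rw [h1]
    exact Submodule.add_mem_sup
      (Ideal.mul_mem_left _ _ (Ideal.subset_span rfl)) (hkey n)
  obtain ⟨n, hn⟩ := monotone_stabilizes_iff_noetherian.mpr
    (inferInstance : IsNoetherian A A) ⟨_, hmono⟩
  -- xs (n+1) ∈ span {xs n} ⊔ N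
  have he : Ideal.span {xs n} ⊔ N = Ideal.span {xs (n+1)} ⊔ N :=
    hn (n+1) (Nat.le_succ n)
  have hmem : xs (n+1) ∈ Ideal.span {xs n} ⊔ N := by
    rw [he]; exact Ideal.mem_sup_left (Ideal.subset_span rfl)
  obtain ⟨s, hs, t, ht, hst⟩ := Submodule.mem_sup.mp hmem
  obtain ⟨a, ha⟩ := Ideal.mem_span_singleton'.mp hs
  set y := xs (n+1) with hy
  have hy' : y = a * xs n + t := by rw [← hst, ha]
  -- y - b * y^2 is nilpotent, where b = a * y^(p-2)
  obtain ⟨b, hb⟩ : ∃ b : A, b = a * y ^ (p-2) := ⟨_, rfl⟩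
  have hnil : IsNilpotent (y - b * y ^ 2) := by
    have hyq : y ^ (p-2) * y ^ 2 = y ^ p := by
      rw [← pow_add, Nat.sub_add_cancel hp2]
    have heq : y - b * y ^ 2 = a * (xs n - y ^ p) + t := by
      rw [hb]; linear_combination hy' - a * hyq
    rw [heq, ← mem_nilradical, ← hN]
    exact N.add_mem (N.mul_mem_left _ (hkey n)) ht
  obtain ⟨K, hK⟩ := hnil
  set L := K + 1 with hL
  have hKL : (y - b * y ^ 2) ^ L = 0 := by rw [hL, pow_succ, hK, zero_mul]
  have h0 : y ^ L * (1 - b*y) ^ L = 0 := by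
    rw [← mul_pow]
    have h2 : y * (1 - b*y) = y - b * y ^ 2 := by ring
    rw [h2, hKL]
  obtain ⟨c, hc⟩ : b * y ∣ 1 - (1 - b*y) ^ L := by
    simpa using sub_dvd_pow_sub_pow 1 (1 - b*y) L
  have hps : y ^ (L+1) = y ^ L * y := pow_succ y L
  have hyL : y ^ L = (b * c) * y ^ (L + 1) := by
    have h3 : y ^ L * (1 - b*y*c) = 0 := by
      rw [show (1 : A) - b*y*c = (1-b*y)^L by linear_combination hc, h0]
    linear_combination h3 - b*c*hps
  have hiter : ∀ j : ℕ, y ^ L = (b*c) ^ j * y ^ (L + j) := by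
    intro j
    induction j with
    | zero => simp
    | succ j ih =>
      calc y ^ L = (b*c) ^ j * y ^ (L + j) := ih
        _ = (b*c) ^ j * (y ^ L * y ^ j) := by rw [pow_add]
        _ = (b*c) ^ j * (((b*c) * y ^ (L+1)) * y ^ j) := by rw [← hyL]
        _ = (b*c) ^ (j+1) * y ^ (L + (j+1)) := by ring
  have hj := hiter L
  obtain ⟨d, hd⟩ : ∃ d : A, d = (b*c) ^ L := ⟨_, rfl⟩
  rw [← hd] at hj
  have hidem : (d * y ^ L) * (d * y ^ L) = d * y ^ L := by
    calc (d * y ^ L) * (d * y ^ L) = d * (d * y ^ (L + L)) := by ring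
      _ = d * y ^ L := by rw [← hj]
  rcases hconn _ hidem with h01 | h01
  · -- y is nilpotent, hence x is nilpotent, hence x = 0
    left
    have hyLz : y ^ L = 0 := by
      calc y ^ L = d * y ^ (L + L) := hj
        _ = (d * y ^ L) * y ^ L := by ring
        _ = 0 := by rw [h01, zero_mul]
    have hxnil : IsNilpotent x := by
      rw [← hxsp (n+1)]
      exact IsNilpotent.pow_of_pos (⟨L, hyLz⟩ : IsNilpotent y) (by positivity)
    obtain ⟨K0, hK0⟩ := IsNoetherianRing.isNilpotent_nilradical A
    obtain ⟨c0, hc0⟩ := hxnil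
    have hmemN : xs K0 ∈ nilradical A := by
      rw [mem_nilradical]
      exact ⟨p ^ K0 * c0, by rw [pow_mul, hxsp, hc0]⟩
    have hle : K0 ≤ p ^ K0 := (Nat.lt_pow_self (n := K0) (by omega)).le
    have hxmem : x ∈ (nilradical A) ^ (p ^ K0) := by
      rw [← hxsp K0]
      exact Ideal.pow_mem_pow hmemN _
    have : x ∈ (0 : Ideal A) := by
      rw [← hK0]
      exact Ideal.pow_le_pow_right hle hxmem
    simpa using this
  · -- y is a unit, hence x is a unit
    right
    have hyu : IsUnit y := IsUnit.of_mul_eq_one (a := y) (d * y ^ K) (by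
      rw [← h01, hL]; ring)
    rw [← hxsp (n+1)]
    exact hyu.pow _
end

section
/- Let p be an odd prime, R = F_p[[u,v]]/(uv), and consider the inverse system of R-modules M_n = R ⊕ R/u^{p^n} with transition maps G_n : M_n → M_{n−1} defined by G_n(f, g) = (f, g · v^{p^n − p^{n−1}}). Then the natural map R → lim_n M_n, f ↦ (f, 0)_n, is an isomorphism of R-modules. -/
open MvPowerSeries Finsupp

section Aux16

variable {K : Type*} [CommRing K]

private lemma aux_pow16 {p : ℕ} (hp : 2 ≤ p) (n k : ℕ) : p ^ n + k ≤ p ^ (n + k) := by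
  induction k with
  | zero => simp
  | succ k ih =>
    have h1 : 1 ≤ p ^ (n + k) := Nat.one_le_pow _ _ (by omega)
    calc p ^ n + (k + 1) ≤ p ^ (n + k) + 1 := by omega
      _ ≤ p ^ (n + k) * 2 := by omega
      _ ≤ p ^ (n + k) * p := Nat.mul_le_mul_left _ hp
      _ = p ^ (n + k + 1) := (pow_succ p (n + k)).symm

/-- Coefficient vanishing from membership in the big span. -/
private lemma coeff_zero_of_mem16 {N e : ℕ} {a : MvPowerSeries (Fin 2) K}
    (ha : a ∈ Ideal.span {(X 0 : MvPowerSeries (Fin 2) K) * X 1, X 0 ^ N, X 1 ^ e})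
    (m : Fin 2 →₀ ℕ) (hm : m 0 = 0 ∨ m 1 = 0) (hm0 : m 0 < N) (hm1 : m 1 < e) :
    coeff m a = 0 := by
  rw [show ({(X 0 : MvPowerSeries (Fin 2) K) * X 1, X 0 ^ N, X 1 ^ e} : Set _)
      = insert (X 0 * X 1) (insert (X 0 ^ N) {X 1 ^ e}) from rfl,
    Ideal.mem_span_insert] at ha
  obtain ⟨r, w, hw, rfl⟩ := ha
  rw [Ideal.mem_span_insert] at hw
  obtain ⟨s, w', hw', rfl⟩ := hw
  obtain ⟨t, rfl⟩ := Ideal.mem_span_singleton'.mp hw'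
  have hr : coeff m (r * (X 0 * X 1)) = 0 := by
    rcases hm with h | h
    · exact X_dvd_iff.mp ((dvd_mul_right (X 0) (X 1)).trans (dvd_mul_left _ r)) m h
    · exact X_dvd_iff.mp ((dvd_mul_left (X 1) (X 0)).trans (dvd_mul_left _ r)) m h
  have hs : coeff m (s * X 0 ^ N) = 0 :=
    X_pow_dvd_iff.mp (dvd_mul_left _ s) m hm0
  have ht : coeff m (t * X 1 ^ e) = 0 :=
    X_pow_dvd_iff.mp (dvd_mul_left _ t) m hm1
  simp [map_add, hr, hs, ht]

/-- If the pure-`v` coefficients of `a` vanish and the pure-`u` coefficients below `N`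
vanish, then `a ∈ (uv, u^N)`. -/
private lemma mem_span_of_coeff16 (N : ℕ) (a : MvPowerSeries (Fin 2) K)
    (h0 : ∀ m : Fin 2 →₀ ℕ, m 1 = 0 → m 0 < N → coeff m a = 0)
    (hv : ∀ m : Fin 2 →₀ ℕ, m 0 = 0 → coeff m a = 0) :
    a ∈ Ideal.span {(X 0 : MvPowerSeries (Fin 2) K) * X 1, X 0 ^ N} := by
  classical
  -- the "pure u" part of a
  set au : MvPowerSeries (Fin 2) K :=
    fun m => if m 1 = 0 then coeff m a else 0 with hau_def
  have hau : ∀ m : Fin 2 →₀ ℕ, coeff m au = if m 1 = 0 then coeff m a else 0 :=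
    fun m => rfl
  have h1 : (X 0 : MvPowerSeries (Fin 2) K) ^ N ∣ au := by
    refine X_pow_dvd_iff.mpr fun m hm => ?_
    rw [hau]
    split_ifs with h
    · exact h0 m h hm
    · rfl
  obtain ⟨d, hd⟩ := h1
  -- the rest is divisible by X0 * X1
  set n₀ : Fin 2 →₀ ℕ := Finsupp.single 0 1 + Finsupp.single 1 1 with hn₀
  have hn₀0 : n₀ 0 = 1 := by simp [hn₀, Finsupp.single_apply]
  have hn₀1 : n₀ 1 = 1 := by simp [hn₀, Finsupp.single_apply]
  have hXX : (X 0 : MvPowerSeries (Fin 2) K) * X 1 = monomial n₀ 1 := by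
    rw [X_def, X_def, monomial_mul_monomial, one_mul]
  have hrest : ∀ m : Fin 2 →₀ ℕ, m 0 = 0 ∨ m 1 = 0 → coeff m (a - au) = 0 := by
    intro m hm
    rw [map_sub, hau]
    rcases hm with h | h
    · split_ifs with h'
      · exact sub_self _
      · rw [hv m h, sub_zero]
    · rw [if_pos h, sub_self]
  set c : MvPowerSeries (Fin 2) K := fun m => coeff (m + n₀) (a - au) with hc_def
  have hc : ∀ m : Fin 2 →₀ ℕ, coeff m c = coeff (m + n₀) (a - au) := fun m => rfl
  have h2 : monomial n₀ 1 * c = a - au := by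
    ext m
    rw [coeff_monomial_mul]
    split_ifs with h
    · rw [one_mul, hc, tsub_add_cancel_of_le h]
    · refine (hrest m ?_).symm
      by_contra hcon
      push_neg at hcon
      exact h fun s => by
        fin_cases s
        · simpa [hn₀0] using Nat.one_le_iff_ne_zero.mpr hcon.1
        · simpa [hn₀1] using Nat.one_le_iff_ne_zero.mpr hcon.2
  refine Ideal.mem_span_pair.mpr ⟨c, d, ?_⟩
  calc c * (X 0 * X 1) + d * X 0 ^ N = (a - au) + au := by
        rw [hXX, mul_comm c, h2, mul_comm d, ← hd]
    _ = a := sub_add_cancel a au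

end Aux16

/-- `R = F_p[[u,v]]/(uv)`. -/
noncomputable abbrev R16 (p : ℕ) : Type :=
  MvPowerSeries (Fin 2) (ZMod p) ⧸
    (Ideal.span {MvPowerSeries.X 0 * MvPowerSeries.X 1} :
      Ideal (MvPowerSeries (Fin 2) (ZMod p)))

/-- The image `u` of the first variable in `R`. -/
noncomputable abbrev u16 (p : ℕ) : R16 p :=
  Ideal.Quotient.mk _ (MvPowerSeries.X 0)

/-- The image `v` of the second variable in `R`. -/
noncomputable abbrev v16 (p : ℕ) : R16 p :=
  Ideal.Quotient.mk _ (MvPowerSeries.X 1)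

/-- The module `M n = R ⊕ R/(u^{p^n})`. -/
noncomputable abbrev M16 (p n : ℕ) : Type :=
  R16 p × (R16 p ⧸ (Ideal.span {u16 p ^ p ^ n} : Ideal (R16 p)))

/-- The transition map `G_{n+1} : M_{n+1} → M_n`, `(f, g) ↦ (f, g · v^{p^{n+1} - p^n})`. -/
noncomputable def G16 (p : ℕ) [Fact p.Prime] (n : ℕ) (x : M16 p (n + 1)) : M16 p n :=
  (x.1,
    Ideal.Quotient.factor
      (Ideal.span_singleton_le_span_singleton.mpr
        (pow_dvd_pow (u16 p)
          (Nat.pow_le_pow_right (Nat.Prime.one_lt (Fact.out : p.Prime)).le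
            (Nat.le_succ n)))) x.2
      * Ideal.Quotient.mk _ (v16 p ^ (p ^ (n + 1) - p ^ n)))

/-- The composite map `F_p[[u,v]] → R/(u^{p^n})`. -/
noncomputable def mk216 (p n : ℕ) :
    MvPowerSeries (Fin 2) (ZMod p) →+*
      (R16 p ⧸ (Ideal.span {u16 p ^ p ^ n} : Ideal (R16 p))) :=
  (Ideal.Quotient.mk _).comp (Ideal.Quotient.mk _)

private lemma mk216_surjective (p n : ℕ) : Function.Surjective (mk216 p n) :=
  (Ideal.Quotient.mk_surjective).comp (Ideal.Quotient.mk_surjective)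

private lemma mk216_eq_zero_iff (p n : ℕ) (b : MvPowerSeries (Fin 2) (ZMod p)) :
    mk216 p n b = 0 ↔
      b ∈ Ideal.span {(MvPowerSeries.X 0 : MvPowerSeries (Fin 2) (ZMod p)) *
        MvPowerSeries.X 1, MvPowerSeries.X 0 ^ p ^ n} := by
  have hu : u16 p ^ p ^ n = Ideal.Quotient.mk _ (MvPowerSeries.X 0 ^ p ^ n) :=
    (map_pow _ _ _).symm
  constructor
  · intro h
    have h1 : Ideal.Quotient.mk (Ideal.span {u16 p ^ p ^ n}) (Ideal.Quotient.mk _ b) = 0 := h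
    rw [Ideal.Quotient.eq_zero_iff_mem, Ideal.mem_span_singleton'] at h1
    obtain ⟨r, hr⟩ := h1
    obtain ⟨s, rfl⟩ := Ideal.Quotient.mk_surjective r
    rw [hu, ← map_mul] at hr
    have h2 : b - s * MvPowerSeries.X 0 ^ p ^ n ∈
        (Ideal.span {(MvPowerSeries.X 0 : MvPowerSeries (Fin 2) (ZMod p)) *
          MvPowerSeries.X 1} : Ideal _) := by
      rw [← Ideal.Quotient.eq_zero_iff_mem, map_sub, hr, sub_self]
    obtain ⟨t, ht⟩ := Ideal.mem_span_singleton'.mp h2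
    exact Ideal.mem_span_pair.mpr ⟨t, s, by rw [ht]; ring⟩
  · intro h
    obtain ⟨r, s, hrs⟩ := Ideal.mem_span_pair.mp h
    have h1 : (Ideal.Quotient.mk _ (MvPowerSeries.X 0 * MvPowerSeries.X 1) : R16 p) = 0 :=
      Ideal.Quotient.eq_zero_iff_mem.mpr (Ideal.subset_span rfl)
    have h2 : (Ideal.Quotient.mk _ b : R16 p) ∈ Ideal.span {u16 p ^ p ^ n} := by
      rw [← hrs, map_add]
      have h3 : (Ideal.Quotient.mk _ (r * (MvPowerSeries.X 0 * MvPowerSeries.X 1)) : R16 p)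
          = 0 := by rw [map_mul, h1, mul_zero]
      rw [h3, zero_add]
      exact Ideal.mem_span_singleton'.mpr
        ⟨Ideal.Quotient.mk _ s, by rw [hu, ← map_mul]⟩
    show Ideal.Quotient.mk (Ideal.span {u16 p ^ p ^ n}) (Ideal.Quotient.mk _ b) = 0
    rwa [Ideal.Quotient.eq_zero_iff_mem]

private lemma chain16 (p : ℕ) [Fact p.Prime] (x : ∀ n, M16 p n)
    (hx : ∀ n, G16 p n (x (n + 1)) = x n) :
    ∀ k n (a : MvPowerSeries (Fin 2) (ZMod p)),
      mk216 p (n + k) a = (x (n + k)).2 →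
        mk216 p n (a * MvPowerSeries.X 1 ^ (p ^ (n + k) - p ^ n)) = (x n).2 := by
  intro k
  induction k with
  | zero =>
    intro n a ha
    simpa using ha
  | succ k ih =>
    intro n a ha
    have hp2 : 2 ≤ p := (Fact.out : p.Prime).two_le
    -- from the compatibility at level n+k
    have hG := congrArg Prod.snd (hx (n + k))
    have hfac : Ideal.Quotient.factor
        (Ideal.span_singleton_le_span_singleton.mpr
          (pow_dvd_pow (u16 p)
            (Nat.pow_le_pow_right (Nat.Prime.one_lt (Fact.out : p.Prime)).le
              (Nat.le_succ (n + k))))) ((x (n + k + 1)).2) = mk216 p (n + k) a := by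
      rw [← show (mk216 p (n + k + 1)) a = (x (n + k + 1)).2 from ha]
      exact Ideal.Quotient.factor_mk _ _
    have hv : (Ideal.Quotient.mk (Ideal.span {u16 p ^ p ^ (n + k)})
        (v16 p ^ (p ^ (n + k + 1) - p ^ (n + k)))) =
        mk216 p (n + k) (MvPowerSeries.X 1 ^ (p ^ (n + k + 1) - p ^ (n + k))) := by
      have hpow : v16 p ^ (p ^ (n + k + 1) - p ^ (n + k))
          = Ideal.Quotient.mk _ (MvPowerSeries.X 1 ^ (p ^ (n + k + 1) - p ^ (n + k))) := by
        rw [map_pow]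
      rw [hpow]
      rfl
    have hstep : mk216 p (n + k) (a * MvPowerSeries.X 1 ^ (p ^ (n + k + 1) - p ^ (n + k)))
        = (x (n + k)).2 := by
      rw [map_mul, ← hfac, ← hv]
      exact hG
    have := ih n _ hstep
    rw [mul_assoc, ← pow_add] at this
    have he : p ^ (n + k + 1) - p ^ (n + k) + (p ^ (n + k) - p ^ n)
        = p ^ (n + (k + 1)) - p ^ n := by
      have h1 : p ^ n ≤ p ^ (n + k) := Nat.pow_le_pow_right (by omega) (by omega)
      have h2 : p ^ (n + k) ≤ p ^ (n + k + 1) := Nat.pow_le_pow_right (by omega) (by omega)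
      have h4 : p ^ (n + (k + 1)) = p ^ (n + k + 1) := rfl
      omega
    rwa [he] at this

/-- **The inverse limit of the system `M_n = R ⊕ R/(u^{p^n})` with transition
maps `(f,g) ↦ (f, g·v^{p^{n+1}-p^n})` over `R = F_p[[u,v]]/(uv)` (p odd) is `R`**:
the natural map `f ↦ (f, 0)ₙ` is a bijection of `R` onto the inverse limit
(and it is manifestly `R`-linear, hence an isomorphism of `R`-modules). -/
theorem limit_M16_eq_base (p : ℕ) [Fact p.Prime] (hp : p ≠ 2) :
    Set.BijOn (fun (f : R16 p) => (fun n => ((f, 0) : M16 p n)))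
      Set.univ {x : ∀ n, M16 p n | ∀ n, G16 p n (x (n + 1)) = x n} := by
  have hp2 : 2 ≤ p := (Fact.out : p.Prime).two_le
  refine ⟨?_, ?_, ?_⟩
  · -- MapsTo
    intro f _ n
    show G16 p n (f, 0) = (f, 0)
    simp [G16]
  · -- InjOn
    intro f _ g _ h
    have := congrFun h 0
    exact congrArg Prod.fst this
  · -- SurjOn
    intro x hx
    simp only [Set.mem_setOf_eq] at hx
    refine ⟨(x 0).1, Set.mem_univ _, ?_⟩
    have hfst : ∀ n, (x n).1 = (x 0).1 := by
      intro n
      induction n with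
      | zero => rfl
      | succ n ih =>
        have h1 : (x (n + 1)).1 = (x n).1 := (congrArg Prod.fst (hx n)).symm ▸ rfl
        exact h1.trans ih
    have hsnd : ∀ n, (x n).2 = 0 := by
      intro n
      obtain ⟨a, ha⟩ := mk216_surjective p n ((x n).2)
      have key : ∀ k, a ∈ Ideal.span
          {(MvPowerSeries.X 0 : MvPowerSeries (Fin 2) (ZMod p)) * MvPowerSeries.X 1,
            MvPowerSeries.X 0 ^ p ^ n, MvPowerSeries.X 1 ^ (p ^ (n + k) - p ^ n)} := by
        intro k
        obtain ⟨b, hb⟩ := mk216_surjective p (n + k) ((x (n + k)).2)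
        have h2 := chain16 p x hx k n b hb
        have h3 : mk216 p n (a - b * MvPowerSeries.X 1 ^ (p ^ (n + k) - p ^ n)) = 0 := by
          rw [map_sub, ha, h2, sub_self]
        have h4 := (mk216_eq_zero_iff p n _).mp h3
        have h5 : a - b * MvPowerSeries.X 1 ^ (p ^ (n + k) - p ^ n) ∈ Ideal.span
            {(MvPowerSeries.X 0 : MvPowerSeries (Fin 2) (ZMod p)) * MvPowerSeries.X 1,
              MvPowerSeries.X 0 ^ p ^ n, MvPowerSeries.X 1 ^ (p ^ (n + k) - p ^ n)} := by
          refine Ideal.span_mono ?_ h4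
          intro y hy
          rcases hy with h | h
          · exact Or.inl h
          · exact Or.inr (Or.inl h)
        have h6 : b * MvPowerSeries.X 1 ^ (p ^ (n + k) - p ^ n) ∈ Ideal.span
            {(MvPowerSeries.X 0 : MvPowerSeries (Fin 2) (ZMod p)) * MvPowerSeries.X 1,
              MvPowerSeries.X 0 ^ p ^ n, MvPowerSeries.X 1 ^ (p ^ (n + k) - p ^ n)} :=
          Ideal.mul_mem_left _ b (Ideal.subset_span (Or.inr (Or.inr rfl)))
        simpa using Ideal.add_mem _ h5 h6
      have hposN : 0 < p ^ n := pow_pos (by omega) n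
      have hvcoeff : ∀ m : Fin 2 →₀ ℕ, m 0 = 0 → MvPowerSeries.coeff m a = 0 := by
        intro m hm
        have he : m 1 < p ^ (n + (m 1 + 1)) - p ^ n := by
          have := aux_pow16 hp2 n (m 1 + 1)
          omega
        exact coeff_zero_of_mem16 (key (m 1 + 1)) m (Or.inl hm) (by omega) he
      have hucoeff : ∀ m : Fin 2 →₀ ℕ, m 1 = 0 → m 0 < p ^ n →
          MvPowerSeries.coeff m a = 0 := by
        intro m hm hm'
        have he : m 1 < p ^ (n + 1) - p ^ n := by
          have := aux_pow16 hp2 n 1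
          omega
        exact coeff_zero_of_mem16 (key 1) m (Or.inr hm) hm' he
      have hmem := mem_span_of_coeff16 (p ^ n) a hucoeff hvcoeff
      rw [← ha]
      exact (mk216_eq_zero_iff p n a).mpr hmem
    funext n
    show ((x 0).1, (0 : R16 p ⧸ _)) = x n
    rw [← hfst n, ← hsnd n]
end
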